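/- For every real $\nu$ with $-1<\nu<0$ and every $z>0$, the modified Bessel functions satisfy $I_\nu(z) - I_{-\nu}(z) \ge 0$, where $I_\nu(z)=\sum_{k=0}^\infty \frac{(z/2)^{2k+\nu}}{k!\,\Gamma(k+\nu+1)}$. -/

import Mathlib

/- Auxiliary development: we prove that for `0 < a < 1` and `x > 0`,
`Γ(a)Γ(1-a) * (∑ x^k/(k!Γ(k+1-a)) - x^a ∑ x^k/(k!Γ(k+1+a))) = ∫_0^∞ exp(-u-x/u) u^(a-1) du ≥ 0`,
by showing both sides solve the same singular first-order ODE system with the same limit at `0+`.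
This is exactly the positivity of the modified Bessel function `K_a`. -/

noncomputable section
open Real MeasureTheory Set Filter Topology intervalIntegral

namespace BesselPos

def Lc (b : ℝ) (k : ℕ) : ℝ := 1 / ((k.factorial : ℝ) * Real.Gamma ((k : ℝ) + 1 - b))
def Pc (b : ℝ) (k : ℕ) : ℝ := 1 / ((k.factorial : ℝ) * Real.Gamma ((k : ℝ) + 1 + b))
def L (b x : ℝ) : ℝ := ∑' k : ℕ, Lc b k * x ^ k
def P (b x : ℝ) : ℝ := ∑' k : ℕ, Pc b k * x ^ k
def Pd (b x : ℝ) : ℝ := ∑' k : ℕ, ((k : ℝ) + 1) * Pc b (k + 1) * x ^ k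
def U (b x : ℝ) : ℝ := Real.Gamma b * Real.Gamma (1 - b) * (L b x - x ^ b * P b x)
def Phi (b x : ℝ) : ℝ := ∫ u in Ioi (0:ℝ), Real.exp (-u - x/u) * u ^ (b - 1)

variable {b : ℝ}

lemma GL_pos (hb1 : b < 1) (k : ℕ) : 0 < Real.Gamma ((k : ℝ) + 1 - b) :=
  Real.Gamma_pos_of_pos (by have := Nat.cast_nonneg (α := ℝ) k; linarith)

lemma GP_pos (hb0 : 0 < b) (k : ℕ) : 0 < Real.Gamma ((k : ℝ) + 1 + b) :=
  Real.Gamma_pos_of_pos (by have := Nat.cast_nonneg (α := ℝ) k; linarith)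

lemma GL_ge (hb0 : 0 < b) (hb1 : b < 1) (k : ℕ) :
    Real.Gamma (2 - b) ≤ Real.Gamma ((k : ℝ) + 1 - b) := by
  have key : ∀ n : ℕ, Real.Gamma (2 - b) ≤ Real.Gamma ((n : ℝ) + 2 - b) := by
    intro n
    induction n with
    | zero => norm_num
    | succ m ih =>
      have hm : ((m : ℝ) + 2 - b) ≠ 0 := by have := Nat.cast_nonneg (α := ℝ) m; intro h; linarith [h]
      have h1 : ((m : ℝ) + 1 + 2 - b) = ((m : ℝ) + 2 - b) + 1 := by ring
      have h2 : Real.Gamma (((m : ℝ) + 2 - b) + 1) = ((m : ℝ) + 2 - b) * Real.Gamma ((m : ℝ) + 2 - b) :=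
        Real.Gamma_add_one hm
      have hpos : 0 < Real.Gamma ((m : ℝ) + 2 - b) := by
        have := GL_pos hb1 (m + 1)
        push_cast at this ⊢
        convert this using 2
        ring
      have hfac : (1 : ℝ) ≤ (m : ℝ) + 2 - b := by have := Nat.cast_nonneg (α := ℝ) m; linarith
      calc Real.Gamma (2 - b) ≤ Real.Gamma ((m : ℝ) + 2 - b) := ih
        _ ≤ ((m : ℝ) + 2 - b) * Real.Gamma ((m : ℝ) + 2 - b) := le_mul_of_one_le_left hpos.le hfac
        _ = Real.Gamma (((m : ℕ) + 1 : ℕ) + 2 - b) := by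
              rw [← h2]; congr 1; push_cast; ring
  cases k with
  | zero =>
    have h2 : Real.Gamma (2 - b) = (1 - b) * Real.Gamma (1 - b) := by
      have : (2 : ℝ) - b = (1 - b) + 1 := by ring
      rw [this, Real.Gamma_add_one (by linarith)]
    have hpos : 0 < Real.Gamma (1 - b) := Real.Gamma_pos_of_pos (by linarith)
    simp only [Nat.cast_zero, zero_add]
    rw [h2]
    nlinarith
  | succ m =>
    have := key m
    push_cast
    convert this using 2
    ring

lemma GP_ge (hb0 : 0 < b) (k : ℕ) :
    Real.Gamma (1 + b) ≤ Real.Gamma ((k : ℝ) + 1 + b) := by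
  induction k with
  | zero => norm_num
  | succ m ih =>
    have hm : ((m : ℝ) + 1 + b) ≠ 0 := by have := Nat.cast_nonneg (α := ℝ) m; intro h; linarith [h]
    have h2 : Real.Gamma (((m : ℝ) + 1 + b) + 1) = ((m : ℝ) + 1 + b) * Real.Gamma ((m : ℝ) + 1 + b) :=
      Real.Gamma_add_one hm
    have hpos : 0 < Real.Gamma ((m : ℝ) + 1 + b) := GP_pos hb0 m
    have hfac : (1 : ℝ) ≤ (m : ℝ) + 1 + b := by have := Nat.cast_nonneg (α := ℝ) m; linarith
    calc Real.Gamma (1 + b) ≤ Real.Gamma ((m : ℝ) + 1 + b) := ih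
      _ ≤ ((m : ℝ) + 1 + b) * Real.Gamma ((m : ℝ) + 1 + b) := le_mul_of_one_le_left hpos.le hfac
      _ = Real.Gamma (((m : ℕ) + 1 : ℕ) + 1 + b) := by rw [← h2]; push_cast; ring_nf
    
lemma Lc_pos (hb1 : b < 1) (k : ℕ) : 0 < Lc b k := by
  unfold Lc
  have := GL_pos hb1 k
  positivity

lemma Pc_pos (hb0 : 0 < b) (k : ℕ) : 0 < Pc b k := by
  unfold Pc
  have := GP_pos hb0 k
  positivity

lemma Lc_le (hb0 : 0 < b) (hb1 : b < 1) (k : ℕ) :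
    Lc b k ≤ 1 / ((k.factorial : ℝ) * Real.Gamma (2 - b)) := by
  unfold Lc
  have h1 := GL_ge hb0 hb1 k
  have h2 : 0 < Real.Gamma (2 - b) := Real.Gamma_pos_of_pos (by linarith)
  have h3 : (0:ℝ) < k.factorial := by positivity
  apply one_div_le_one_div_of_le (by positivity)
  exact mul_le_mul_of_nonneg_left h1 h3.le

lemma Pc_le (hb0 : 0 < b) (k : ℕ) :
    Pc b k ≤ 1 / ((k.factorial : ℝ) * Real.Gamma (1 + b)) := by
  unfold Pc
  have h1 := GP_ge hb0 k
  have h2 : 0 < Real.Gamma (1 + b) := Real.Gamma_pos_of_pos (by linarith)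
  have h3 : (0:ℝ) < k.factorial := by positivity
  apply one_div_le_one_div_of_le (by positivity)
  exact mul_le_mul_of_nonneg_left h1 h3.le


/-- generic summability for series with factorially-decaying coefficients -/
lemma summable_aux {c : ℕ → ℝ} {C : ℝ} (hc : ∀ k, |c k| ≤ C / k.factorial) (x : ℝ) :
    Summable (fun k : ℕ => c k * x ^ k) := by
  apply Summable.of_norm_bounded (g := fun k : ℕ => C * (|x| ^ k / k.factorial))
    ((Real.summable_pow_div_factorial |x|).mul_left C)
  intro k
  rw [norm_mul, norm_pow, Real.norm_eq_abs, Real.norm_eq_abs]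
  calc |c k| * |x| ^ k ≤ (C / k.factorial) * |x| ^ k := by
        apply mul_le_mul_of_nonneg_right (hc k) (by positivity)
    _ = C * (|x| ^ k / k.factorial) := by ring

lemma summable_deriv_aux {c : ℕ → ℝ} {C : ℝ} (hc : ∀ k, |c k| ≤ C / k.factorial) {R : ℝ}
    (hR : 0 < R) :
    Summable (fun k : ℕ => C * ((k : ℝ) * R ^ (k - 1) / k.factorial)) := by
  apply (summable_nat_add_iff 1).mp
  have : (fun n : ℕ => C * (((n + 1 : ℕ) : ℝ) * R ^ ((n + 1) - 1) / ((n + 1 : ℕ)).factorial))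
      = fun n : ℕ => C * (R ^ n / n.factorial) := by
    funext n
    have h1 : (((n + 1 : ℕ)).factorial : ℝ) = ((n + 1 : ℕ) : ℝ) * (n.factorial : ℝ) := by
      push_cast [Nat.factorial_succ]; ring
    have h2 : ((n + 1 : ℕ) : ℝ) ≠ 0 := by positivity
    simp only [Nat.add_sub_cancel, h1]
    field_simp
  rw [this]
  exact ((Real.summable_pow_div_factorial R).mul_left C)

/-- generic term-by-term differentiation -/
lemma hasDerivAt_series {c : ℕ → ℝ} {C : ℝ} (hc : ∀ k, |c k| ≤ C / k.factorial) (x : ℝ) :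
    HasDerivAt (fun y => ∑' k : ℕ, c k * y ^ k)
      (∑' k : ℕ, ((k : ℝ) + 1) * c (k + 1) * x ^ k) x := by
  set R := |x| + 1 with hRdef
  have hR : 0 < R := by positivity
  have hxR : x ∈ Metric.ball (0 : ℝ) R := by
    simp [Real.norm_eq_abs, hRdef]
  have hu := summable_deriv_aux hc hR
  have hbound : ∀ (k : ℕ) (y : ℝ), y ∈ Metric.ball (0 : ℝ) R →
      ‖c k * ((k : ℝ) * y ^ (k - 1))‖ ≤ C * ((k : ℝ) * R ^ (k - 1) / k.factorial) := by
    intro k y hy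
    have hyR : |y| ≤ R := by
      have := mem_ball_iff_norm.mp hy
      rw [sub_zero, Real.norm_eq_abs] at this
      linarith
    rw [norm_mul, norm_mul, Real.norm_eq_abs, Real.norm_eq_abs, Real.norm_eq_abs]
    rw [abs_pow]
    have h1 : |y| ^ (k - 1) ≤ R ^ (k - 1) := pow_le_pow_left₀ (abs_nonneg y) hyR _
    have h2 : |(k : ℝ)| = (k : ℝ) := abs_of_nonneg (Nat.cast_nonneg k)
    rw [h2]
    calc |c k| * ((k : ℝ) * |y| ^ (k - 1)) ≤ (C / k.factorial) * ((k : ℝ) * R ^ (k - 1)) := by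
          apply mul_le_mul (hc k) _ (by positivity) _
          · exact mul_le_mul_of_nonneg_left h1 (Nat.cast_nonneg k)
          · have h3 : (0:ℝ) < k.factorial := by positivity
            have : 0 ≤ |c k| := abs_nonneg _
            have := (hc k)
            nlinarith [pow_nonneg hR.le (k-1), Nat.cast_nonneg (α := ℝ) k]
      _ = C * ((k : ℝ) * R ^ (k - 1) / k.factorial) := by
          field_simp
    
  have hderiv : ∀ (k : ℕ) (y : ℝ), y ∈ Metric.ball (0 : ℝ) R →
      HasDerivAt (fun z => c k * z ^ k) (c k * ((k : ℝ) * y ^ (k - 1))) y := by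
    intro k y _
    exact (hasDerivAt_pow k y).const_mul (c k)
  have h := hasDerivAt_tsum_of_isPreconnected hu Metric.isOpen_ball
    (convex_ball (0:ℝ) R).isPreconnected hderiv hbound (Metric.mem_ball_self hR)
    (summable_aux hc 0) hxR
  have hsum' : Summable (fun k : ℕ => c k * ((k : ℝ) * x ^ (k - 1))) :=
    Summable.of_norm_bounded hu (fun k => hbound k x hxR)
  have hrw : ∑' k : ℕ, c k * ((k : ℝ) * x ^ (k - 1))
      = ∑' k : ℕ, ((k : ℝ) + 1) * c (k + 1) * x ^ k := by
    rw [Summable.tsum_eq_zero_add hsum']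
    simp only [Nat.cast_zero, zero_mul, mul_zero, zero_add, Nat.add_sub_cancel]
    apply tsum_congr
    intro k
    push_cast
    ring
  rw [← hrw]
  exact h


lemma Lc_bound (hb0 : 0 < b) (hb1 : b < 1) (k : ℕ) :
    |Lc b k| ≤ (1 / Real.Gamma (2 - b)) / k.factorial := by
  rw [abs_of_pos (Lc_pos hb1 k)]
  calc Lc b k ≤ 1 / ((k.factorial : ℝ) * Real.Gamma (2 - b)) := Lc_le hb0 hb1 k
    _ = (1 / Real.Gamma (2 - b)) / k.factorial := by
        rw [div_div]
        ring_nf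

lemma Pc_bound (hb0 : 0 < b) (k : ℕ) :
    |Pc b k| ≤ (1 / Real.Gamma (1 + b)) / k.factorial := by
  rw [abs_of_pos (Pc_pos hb0 k)]
  calc Pc b k ≤ 1 / ((k.factorial : ℝ) * Real.Gamma (1 + b)) := Pc_le hb0 k
    _ = (1 / Real.Gamma (1 + b)) / k.factorial := by
        rw [div_div]; ring_nf

lemma Pd_coeff_bound (hb0 : 0 < b) (k : ℕ) :
    |((k : ℝ) + 1) * Pc b (k + 1)| ≤ (1 / Real.Gamma (1 + b)) / k.factorial := by
  have h := Pc_bound hb0 (k + 1)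
  have hk1 : (0:ℝ) < (k : ℝ) + 1 := by positivity
  rw [abs_mul, abs_of_pos hk1]
  have hfac : (((k+1).factorial : ℝ)) = ((k:ℝ)+1) * (k.factorial : ℝ) := by
    push_cast [Nat.factorial_succ]; ring
  calc ((k:ℝ)+1) * |Pc b (k+1)| ≤ ((k:ℝ)+1) * ((1 / Real.Gamma (1 + b)) / (k+1).factorial) := by
        apply mul_le_mul_of_nonneg_left _ hk1.le
        simpa using h
    _ = (1 / Real.Gamma (1 + b)) / k.factorial := by
        rw [hfac]
        field_simp

lemma summable_L (hb0 : 0 < b) (hb1 : b < 1) (x : ℝ) :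
    Summable (fun k : ℕ => Lc b k * x ^ k) := summable_aux (Lc_bound hb0 hb1) x

lemma summable_P (hb0 : 0 < b) (x : ℝ) :
    Summable (fun k : ℕ => Pc b k * x ^ k) := summable_aux (Pc_bound hb0) x

lemma summable_Pd (hb0 : 0 < b) (x : ℝ) :
    Summable (fun k : ℕ => ((k : ℝ) + 1) * Pc b (k + 1) * x ^ k) :=
  summable_aux (Pd_coeff_bound hb0) x

lemma Lc_succ (hb1 : b < 1) (k : ℕ) : ((k : ℝ) + 1) * Lc b (k + 1) = Pc (1 - b) k := by
  unfold Lc Pc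
  have hG : ((((k+1) : ℕ) : ℝ) + 1 - b) = ((k : ℝ) + 1 + (1 - b)) := by push_cast; ring
  rw [hG]
  have hGpos : 0 < Real.Gamma ((k : ℝ) + 1 + (1 - b)) := by
    apply Real.Gamma_pos_of_pos
    have := Nat.cast_nonneg (α := ℝ) k
    linarith
  have hfac : (((k+1).factorial : ℝ)) = ((k:ℝ)+1) * (k.factorial : ℝ) := by
    push_cast [Nat.factorial_succ]; ring
  rw [hfac]
  have h1 : (0:ℝ) < (k:ℝ) + 1 := by positivity
  have h2 : (0:ℝ) < (k.factorial : ℝ) := by positivity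
  field_simp

lemma Pc_ode (hb0 : 0 < b) (hb1 : b < 1) (k : ℕ) :
    (b + (k : ℝ)) * Pc b k = Lc (1 - b) k := by
  unfold Lc Pc
  have hkb : (0:ℝ) < (k : ℝ) + b := by positivity
  have hG1 : ((k : ℝ) + 1 + b) = ((k : ℝ) + b) + 1 := by ring
  have hG2 : Real.Gamma (((k : ℝ) + b) + 1) = ((k : ℝ) + b) * Real.Gamma ((k : ℝ) + b) :=
    Real.Gamma_add_one hkb.ne'
  have hG3 : ((k : ℝ) + 1 - (1 - b)) = (k : ℝ) + b := by ring
  rw [hG1, hG2, hG3]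
  have hGpos : 0 < Real.Gamma ((k : ℝ) + b) := Real.Gamma_pos_of_pos hkb
  have h2 : (0:ℝ) < (k.factorial : ℝ) := by positivity
  field_simp
  ring

lemma hasDerivAt_L (hb0 : 0 < b) (hb1 : b < 1) (x : ℝ) :
    HasDerivAt (L b) (P (1 - b) x) x := by
  have h := hasDerivAt_series (Lc_bound hb0 hb1) x
  have : (∑' k : ℕ, ((k : ℝ) + 1) * Lc b (k + 1) * x ^ k) = P (1 - b) x := by
    apply tsum_congr
    intro k
    rw [Lc_succ hb1 k]
  rw [this] at h
  exact h

lemma hasDerivAt_P (hb0 : 0 < b) (x : ℝ) : HasDerivAt (P b) (Pd b x) x :=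
  hasDerivAt_series (Pc_bound hb0) x

lemma P_ode (hb0 : 0 < b) (hb1 : b < 1) (x : ℝ) :
    b * P b x + x * Pd b x = L (1 - b) x := by
  have hsP := summable_P hb0 x
  have hsPd := summable_Pd hb0 x
  set g : ℕ → ℝ := fun k => (k : ℝ) * Pc b k * x ^ k with hg
  have hg_succ : ∀ k : ℕ, g (k + 1) = x * (((k : ℝ) + 1) * Pc b (k + 1) * x ^ k) := by
    intro k
    simp only [hg]
    push_cast
    ring
  have hgs : Summable g := by
    apply (summable_nat_add_iff 1).mp
    have : (fun n : ℕ => g (n + 1)) = fun n : ℕ => x * (((n : ℝ) + 1) * Pc b (n + 1) * x ^ n) := by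
      funext n; exact hg_succ n
    rw [this]
    exact hsPd.mul_left x
  have h2 : x * Pd b x = ∑' k, g k := by
    rw [Pd, ← tsum_mul_left]
    rw [Summable.tsum_eq_zero_add hgs]
    have hg0 : g 0 = 0 := by simp [hg]
    rw [hg0, zero_add]
    apply tsum_congr
    intro k
    exact (hg_succ k).symm
  have h1 : b * P b x = ∑' k, b * (Pc b k * x ^ k) := by
    rw [P, ← tsum_mul_left]
  rw [h1, h2]
  rw [← Summable.tsum_add (hsP.mul_left b) hgs]
  apply tsum_congr
  intro k
  show b * (Pc b k * x ^ k) + (k : ℝ) * Pc b k * x ^ k = Lc (1 - b) k * x ^ k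
  rw [← Pc_ode hb0 hb1 k]
  ring


lemma hasDerivAt_U (hb0 : 0 < b) (hb1 : b < 1) {x : ℝ} (hx : 0 < x) :
    HasDerivAt (U b) (-(x ^ (b - 1)) * U (1 - b) x) x := by
  have hb0' : 0 < 1 - b := by linarith
  have hb1' : 1 - b < 1 := by linarith
  have hrpow : HasDerivAt (fun y : ℝ => y ^ b) (b * x ^ (b - 1)) x :=
    Real.hasDerivAt_rpow_const (Or.inl hx.ne')
  have hprod : HasDerivAt (fun y : ℝ => y ^ b * P b y)
      (b * x ^ (b - 1) * P b x + x ^ b * Pd b x) x :=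
    hrpow.mul (hasDerivAt_P hb0 x)
  have hinner : HasDerivAt (fun y : ℝ => L b y - y ^ b * P b y)
      (P (1 - b) x - (b * x ^ (b - 1) * P b x + x ^ b * Pd b x)) x :=
    (hasDerivAt_L hb0 hb1 x).sub hprod
  have := hinner.const_mul (Real.Gamma b * Real.Gamma (1 - b))
  refine this.congr_deriv ?_
  symm
  have hxb : x ^ b = x ^ (b - 1) * x := by
    rw [← Real.rpow_add_one hx.ne' (b - 1)]
    ring_nf
  have hxx : x ^ (b - 1) * x ^ (1 - b) = 1 := by
    rw [← Real.rpow_add hx]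
    norm_num
  have hode := P_ode hb0 hb1 x
  unfold U
  have h11 : (1 : ℝ) - (1 - b) = b := by ring
  rw [h11]
  calc -(x ^ (b - 1)) * (Real.Gamma (1 - b) * Real.Gamma b * (L (1 - b) x - x ^ (1 - b) * P (1 - b) x))
      = Real.Gamma b * Real.Gamma (1 - b) *
        ((x ^ (b-1) * x ^ (1-b)) * P (1 - b) x - x ^ (b-1) * L (1 - b) x) := by ring
    _ = Real.Gamma b * Real.Gamma (1 - b) *
        (P (1 - b) x - x ^ (b-1) * (b * P b x + x * Pd b x)) := by rw [hxx, hode]; ring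
    _ = Real.Gamma b * Real.Gamma (1 - b) *
        (P (1 - b) x - (b * x ^ (b - 1) * P b x + x ^ b * Pd b x)) := by rw [hxb]; ring

lemma L_zero : L b 0 = Lc b 0 := by
  unfold L
  rw [tsum_eq_single 0]
  · simp
  · intro k hk
    rw [zero_pow hk, mul_zero]

lemma tendsto_U_zero (hb0 : 0 < b) (hb1 : b < 1) :
    Tendsto (U b) (nhdsWithin 0 (Set.Ioi 0)) (nhds (Real.Gamma b)) := by
  have hLcont : ContinuousAt (L b) 0 := (hasDerivAt_L hb0 hb1 0).continuousAt
  have hPcont : ContinuousAt (P b) 0 := (hasDerivAt_P hb0 0).continuousAt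
  have hrpow : ContinuousAt (fun y : ℝ => y ^ b) 0 :=
    Real.continuousAt_rpow_const 0 b (Or.inr hb0.le)
  have h0b : (0 : ℝ) ^ b = 0 := Real.zero_rpow hb0.ne'
  have hU : ContinuousAt (U b) 0 := by
    unfold U
    exact (continuousAt_const.mul ((hLcont).sub (hrpow.mul hPcont)))
  have hval : U b 0 = Real.Gamma b := by
    unfold U
    rw [h0b, zero_mul, sub_zero, L_zero]
    unfold Lc
    have hG : 0 < Real.Gamma (1 - b) := Real.Gamma_pos_of_pos (by linarith)
    simp only [Nat.cast_zero, Nat.factorial_zero, Nat.cast_one, one_mul, zero_add]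
    field_simp
  rw [← hval]
  exact (hU.continuousWithinAt).tendsto


lemma contOn_integrand (b x : ℝ) :
    ContinuousOn (fun u : ℝ => Real.exp (-u - x/u) * u ^ (b - 1)) (Ioi 0) := by
  apply ContinuousOn.mul
  · apply Continuous.comp_continuousOn Real.continuous_exp
    apply ContinuousOn.sub
    · exact (continuous_neg).continuousOn
    · exact continuousOn_const.div continuousOn_id (fun u hu => ne_of_gt hu)
  · exact ContinuousOn.rpow_const continuousOn_id (fun u hu => Or.inl (ne_of_gt hu))

lemma meas_integrand (b x : ℝ) :
    AEStronglyMeasurable (fun u : ℝ => Real.exp (-u - x/u) * u ^ (b - 1))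
      (volume.restrict (Ioi 0)) :=
  (contOn_integrand b x).aestronglyMeasurable measurableSet_Ioi

lemma integrableOn_Phi (hb0 : 0 < b) {x : ℝ} (hx : 0 ≤ x) :
    IntegrableOn (fun u : ℝ => Real.exp (-u - x/u) * u ^ (b - 1)) (Ioi 0) := by
  apply Integrable.mono (Real.GammaIntegral_convergent hb0) (meas_integrand b x)
  filter_upwards [ae_restrict_mem measurableSet_Ioi] with u hu
  have hu0 : 0 < u := hu
  rw [Real.norm_eq_abs, Real.norm_eq_abs]
  have h1 : 0 < u ^ (b - 1) := Real.rpow_pos_of_pos hu0 _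
  rw [abs_of_pos (by positivity), abs_of_pos (by positivity)]
  apply mul_le_mul_of_nonneg_right _ h1.le
  apply Real.exp_le_exp.mpr
  have : 0 ≤ x / u := div_nonneg hx hu0.le
  linarith

lemma Phi_nonneg (b : ℝ) (x : ℝ) : 0 ≤ Phi b x := by
  apply setIntegral_nonneg measurableSet_Ioi
  intro u hu
  have hu0 : (0:ℝ) < u := hu
  have := Real.rpow_pos_of_pos hu0 (b - 1)
  positivity

/-- substitution: `∫ exp(-u-x/u) u^(b-2) = x^(b-1) * Phi (1-b) x` -/
lemma Phi_subst {x : ℝ} (hx : 0 < x) (b : ℝ) :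
    ∫ u in Ioi (0:ℝ), Real.exp (-u - x/u) * u ^ (b - 2)
      = x ^ (b - 1) * Phi (1 - b) x := by
  have h1 : ∫ u in Ioi (0:ℝ), Real.exp (-u - x/u) * u ^ (b - 2)
      = ∫ t in Ioi (0:ℝ), (|(-1:ℝ)| * t ^ ((-1:ℝ) - 1)) •
          (fun u : ℝ => Real.exp (-u - x/u) * u ^ (b - 2)) (t ^ (-1:ℝ)) := by
    exact (integral_comp_rpow_Ioi (fun u : ℝ => Real.exp (-u - x/u) * u ^ (b - 2))
      (by norm_num : (-1:ℝ) ≠ 0)).symm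
  rw [h1]
  have h2 : ∀ t ∈ Ioi (0:ℝ), (|(-1:ℝ)| * t ^ ((-1:ℝ) - 1)) •
          (fun u : ℝ => Real.exp (-u - x/u) * u ^ (b - 2)) (t ^ (-1:ℝ))
      = Real.exp (-(x * t) - 1/t) * t ^ (-b) := by
    intro t ht
    have ht0 : (0:ℝ) < t := ht
    have htinv : t ^ (-1:ℝ) = t⁻¹ := Real.rpow_neg_one t
    simp only [abs_neg, abs_one, one_mul, smul_eq_mul, htinv]
    have e1 : x / t⁻¹ = x * t := by field_simp
    have e2 : (t⁻¹) ^ (b - 2) = t ^ (2 - b) := by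
      rw [← Real.rpow_neg_one t, ← Real.rpow_mul ht0.le]
      congr 1
      ring
    have e3 : -t⁻¹ - x * t = -(x*t) - 1/t := by
      field_simp
      ring
    rw [e1, e2, e3]
    have e4 : t ^ ((-1:ℝ) - 1) * t ^ (2 - b) = t ^ (-b) := by
      rw [← Real.rpow_add ht0]
      congr 1
      ring
    calc t ^ ((-1:ℝ)-1) * (Real.exp (-(x*t) - 1/t) * t ^ (2-b))
        = Real.exp (-(x*t) - 1/t) * (t ^ ((-1:ℝ)-1) * t ^ (2-b)) := by ring
      _ = Real.exp (-(x*t) - 1/t) * t ^ (-b) := by rw [e4]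
  rw [setIntegral_congr_fun measurableSet_Ioi h2]
  -- now substitute t = x⁻¹ * s
  have hxinv : (0:ℝ) < x⁻¹ := inv_pos.mpr hx
  have h3 := integral_comp_mul_left_Ioi
    (fun t : ℝ => Real.exp (-(x * t) - 1/t) * t ^ (-b)) 0 hxinv
  rw [mul_zero] at h3
  have h4 : ∀ s ∈ Ioi (0:ℝ),
      (fun t : ℝ => Real.exp (-(x * t) - 1/t) * t ^ (-b)) (x⁻¹ * s)
        = x ^ b * (Real.exp (-s - x/s) * s ^ ((1 - b) - 1)) := by
    intro s hs
    have hs0 : (0:ℝ) < s := hs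
    simp only
    have e1 : x * (x⁻¹ * s) = s := by field_simp
    have e2 : 1 / (x⁻¹ * s) = x / s := by field_simp
    have e3 : (x⁻¹ * s) ^ (-b) = x ^ b * s ^ ((1-b) - 1) := by
      rw [Real.mul_rpow (le_of_lt hxinv) hs0.le, ← Real.rpow_neg_one x,
        ← Real.rpow_mul hx.le]
      have : (-1 : ℝ) * -b = b := by ring
      rw [this]
      congr 1
      ring
    rw [e1, e2, e3]
    ring
  rw [setIntegral_congr_fun measurableSet_Ioi h4] at h3
  rw [MeasureTheory.integral_const_mul] at h3
  -- h3 : x^b * ∫ ... = (x⁻¹)⁻¹ • ∫ t in Ioi 0, exp(-(x t) - 1/t) t^(-b)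
  rw [inv_inv, smul_eq_mul] at h3
  have hx0 : x ≠ 0 := hx.ne'
  have : ∫ t in Ioi (0:ℝ), Real.exp (-(x * t) - 1/t) * t ^ (-b)
      = x⁻¹ * (x ^ b * Phi (1-b) x) := by
    rw [Phi]
    field_simp at h3 ⊢
    linarith [h3]
  rw [this, ← Real.rpow_neg_one x, ← mul_assoc, ← Real.rpow_add hx]
  congr 2
  ring


/-- key positivity trick: `exp (-c/u) ≤ 4 u² / c²` -/
lemma exp_neg_div_le {c u : ℝ} (hc : 0 < c) (hu : 0 < u) :
    Real.exp (-(c/u)) ≤ 4 * u ^ 2 / c ^ 2 := by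
  have h1 : c / (2*u) + 1 ≤ Real.exp (c / (2*u)) := Real.add_one_le_exp _
  have h2 : Real.exp (c/u) = (Real.exp (c/(2*u))) ^ 2 := by
    rw [← Real.exp_nat_mul]
    norm_num
    congr 1
    field_simp
  have h3 : (c/(2*u)) ^ 2 ≤ (Real.exp (c/(2*u))) ^ 2 := by
    apply pow_le_pow_left₀ (by positivity) _ 2
    nlinarith [div_nonneg hc.le (by positivity : (0:ℝ) ≤ 2*u)]
  have h4 : c^2 / (4*u^2) ≤ Real.exp (c/u) := by
    rw [h2]
    calc c^2/(4*u^2) = (c/(2*u))^2 := by field_simp; ring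
      _ ≤ _ := h3
  rw [Real.exp_neg]
  rw [inv_le_comm₀ (Real.exp_pos _) (by positivity)]
  calc (4*u^2/c^2)⁻¹ = c^2/(4*u^2) := by field_simp
    _ ≤ Real.exp (c/u) := h4

lemma hasDerivAt_Phi (hb0 : 0 < b) (hb1 : b < 1) {x : ℝ} (hx : 0 < x) :
    HasDerivAt (Phi b) (-(x ^ (b - 1)) * Phi (1 - b) x) x := by
  set F : ℝ → ℝ → ℝ := fun y u => Real.exp (-u - y/u) * u ^ (b - 1) with hF
  set F' : ℝ → ℝ → ℝ := fun y u => -(Real.exp (-u - y/u) * u ^ (b - 2)) with hF'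
  set bound : ℝ → ℝ := fun u => 16 / x^2 * (Real.exp (-u) * u ^ ((b+1) - 1)) with hbound
  have hε : 0 < x/2 := by linarith
  have key := _root_.hasDerivAt_integral_of_dominated_loc_of_deriv_le (μ := volume.restrict (Ioi 0))
      (x₀ := x) (F := F) (F' := F') (bound := bound) (Metric.ball_mem_nhds x hε)
      ?_ ?_ ?_ ?_ ?_ ?_
  · obtain ⟨-, hd⟩ := key
    have : (∫ u in Ioi (0:ℝ), F' x u) = -(x ^ (b-1)) * Phi (1-b) x := by
      rw [hF']
      simp only
      rw [MeasureTheory.integral_neg, Phi_subst hx b]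
      ring
    rw [← this]
    exact hd
  · filter_upwards with y
    exact meas_integrand b y
  · exact integrableOn_Phi hb0 hx.le
  · -- measurability of F' x
    apply AEStronglyMeasurable.neg
    have : ContinuousOn (fun u : ℝ => Real.exp (-u - x/u) * u ^ (b - 2)) (Ioi 0) := by
      have h := contOn_integrand (b-1) x
      have e : b - 1 - 1 = b - 2 := by ring
      rwa [e] at h
    exact this.aestronglyMeasurable measurableSet_Ioi
  · -- bound
    filter_upwards [ae_restrict_mem measurableSet_Ioi] with u hu y hy
    have hu0 : (0:ℝ) < u := hu
    have hy2 : x/2 < y := by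
      have := abs_lt.mp (mem_ball_iff_norm.mp hy)
      linarith [this.1]
    have hrp : (0:ℝ) < u ^ (b-2) := Real.rpow_pos_of_pos hu0 _
    rw [hF']
    simp only [norm_neg, Real.norm_eq_abs]
    rw [abs_of_pos (by positivity : (0:ℝ) < Real.exp (-u - y/u) * u ^ (b-2))]
    have step1 : Real.exp (-u - y/u) ≤ Real.exp (-u) * Real.exp (-((x/2)/u)) := by
      rw [← Real.exp_add]
      apply Real.exp_le_exp.mpr
      have : (x/2)/u ≤ y/u := by
        gcongr
      linarith
    have hu2 : (u:ℝ)^(2:ℕ) * u ^ (b-2) = u ^ ((b+1) - 1) := by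
      rw [← Real.rpow_natCast u 2, ← Real.rpow_add hu0]
      congr 1
      push_cast
      ring
    calc Real.exp (-u - y/u) * u ^ (b-2)
        ≤ (Real.exp (-u) * Real.exp (-((x/2)/u))) * u ^ (b-2) :=
          mul_le_mul_of_nonneg_right step1 hrp.le
      _ ≤ (Real.exp (-u) * (4*u^2/(x/2)^2)) * u ^ (b-2) := by
          apply mul_le_mul_of_nonneg_right _ hrp.le
          exact mul_le_mul_of_nonneg_left (exp_neg_div_le hε hu0) (Real.exp_pos _).le
      _ = 16/x^2 * (Real.exp (-u) * (u^(2:ℕ) * u ^ (b-2))) := by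
          field_simp
          ring
      _ = bound u := by
          rw [hbound, hu2]
  · exact ((Real.GammaIntegral_convergent (by linarith : (0:ℝ) < b + 1)).const_mul _)
  · -- differentiability in y
    filter_upwards [ae_restrict_mem measurableSet_Ioi] with u hu y hy
    have hu0 : (0:ℝ) < u := hu
    have h1 : HasDerivAt (fun y : ℝ => -u - y/u) (-(1/u)) y := by
      have : HasDerivAt (fun y : ℝ => y/u) (1/u) y := by
        simpa [div_eq_mul_inv] using (hasDerivAt_id y).mul_const u⁻¹
      simpa using (this.const_sub (-u))
    have h2 : HasDerivAt (fun y : ℝ => Real.exp (-u - y/u)) (-(1/u) * Real.exp (-u - y/u)) y := by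
      simpa [mul_comm] using h1.exp
    have h3 := h2.mul_const (u ^ (b-1))
    rw [hF, hF']
    simp only
    refine h3.congr_deriv ?_
    symm
    have : u ^ (b-2) = u ^ (b-1) / u := by
      rw [← Real.rpow_sub_one hu0.ne']
      congr 1
      ring
    rw [this]
    field_simp

lemma tendsto_Phi_zero (hb0 : 0 < b) :
    Tendsto (Phi b) (nhdsWithin 0 (Ioi 0)) (nhds (Real.Gamma b)) := by
  rw [Real.Gamma_eq_integral hb0]
  apply MeasureTheory.tendsto_integral_filter_of_dominated_convergence
    (bound := fun u => Real.exp (-u) * u ^ (b-1))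
  · filter_upwards with y
    exact meas_integrand b y
  · filter_upwards [self_mem_nhdsWithin] with y hy
    filter_upwards [ae_restrict_mem measurableSet_Ioi] with u hu
    have hu0 : (0:ℝ) < u := hu
    have hy0 : (0:ℝ) < y := hy
    rw [Real.norm_eq_abs, abs_of_pos (by positivity : (0:ℝ) < Real.exp (-u - y/u) * u ^ (b-1))]
    have : Real.exp (-u - y/u) ≤ Real.exp (-u) := by
      apply Real.exp_le_exp.mpr
      have : 0 ≤ y/u := by positivity
      linarith
    apply mul_le_mul_of_nonneg_right this (Real.rpow_pos_of_pos hu0 _).le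
  · exact Real.GammaIntegral_convergent hb0
  · filter_upwards [ae_restrict_mem measurableSet_Ioi] with u hu
    have hu0 : (0:ℝ) < u := hu
    apply Tendsto.mul_const
    apply (Real.continuous_exp.tendsto _).comp
    have h1 : Tendsto (fun y : ℝ => -u - y/u) (nhdsWithin 0 (Ioi 0)) (nhds (-u - 0/u)) := by
      apply Tendsto.mono_left _ nhdsWithin_le_nhds
      exact (tendsto_id.div_const u).const_sub (-u)
    simpa using h1


/-- From a derivative bound and vanishing at `0+`, get an integral-type bound. -/
lemma integral_step {f g : ℝ → ℝ} {r m c X : ℝ} (hX : 0 < X) (hc : 0 ≤ c)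
    (hrm : -1 < r + m)
    (hf : ∀ x ∈ Ioi (0:ℝ), HasDerivAt f (-(x ^ r) * g x) x)
    (hgc : ContinuousOn g (Ioi (0:ℝ)))
    (hf0 : Tendsto f (nhdsWithin 0 (Ioi 0)) (nhds 0))
    (hg : ∀ s ∈ Ioc (0:ℝ) X, |g s| ≤ c * s ^ m) :
    ∀ x ∈ Ioc (0:ℝ) X, |f x| ≤ c * x ^ (r + m + 1) / (r + m + 1) := by
  intro x hx
  obtain ⟨hx0, hxX⟩ := hx
  have key : ∀ ε ∈ Ioo (0:ℝ) x, |f x| ≤ |f ε| + c * x ^ (r + m + 1) / (r + m + 1) := by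
    intro ε hε
    obtain ⟨hε0, hεx⟩ := hε
    have hsub : Set.uIcc ε x ⊆ Ioi (0:ℝ) := by
      rw [Set.uIcc_of_le hεx.le]
      intro t ht
      exact lt_of_lt_of_le hε0 ht.1
    have hderiv : ∀ t ∈ Set.uIcc ε x, HasDerivAt f (-(t ^ r) * g t) t :=
      fun t ht => hf t (hsub ht)
    have hcont : ContinuousOn (fun t : ℝ => -(t ^ r) * g t) (Set.uIcc ε x) := by
      apply ContinuousOn.mul
      · apply ContinuousOn.neg
        apply ContinuousOn.rpow_const (continuousOn_id)
        intro t ht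
        exact Or.inl (ne_of_gt (hsub ht))
      · exact hgc.mono hsub
    have hint : IntervalIntegrable (fun t : ℝ => -(t ^ r) * g t) volume ε x :=
      hcont.intervalIntegrable
    have hftc := intervalIntegral.integral_eq_sub_of_hasDerivAt hderiv hint
    have habs : |∫ t in ε..x, -(t ^ r) * g t| ≤ c * x ^ (r + m + 1) / (r + m + 1) := by
      have h1 : |∫ t in ε..x, -(t ^ r) * g t| ≤ ∫ t in ε..x, |(-(t ^ r) * g t)| :=
        intervalIntegral.abs_integral_le_integral_abs hεx.le
      have hcont2 : ContinuousOn (fun t : ℝ => c * t ^ (r + m)) (Set.uIcc ε x) := by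
        apply ContinuousOn.mul continuousOn_const
        apply ContinuousOn.rpow_const (continuousOn_id)
        intro t ht
        exact Or.inl (ne_of_gt (hsub ht))
      have h2 : ∫ t in ε..x, |(-(t ^ r) * g t)| ≤ ∫ t in ε..x, c * t ^ (r + m) := by
        apply intervalIntegral.integral_mono_on hεx.le
        · exact (hcont.abs).intervalIntegrable
        · exact hcont2.intervalIntegrable
        · intro t ht
          have ht0 : 0 < t := lt_of_lt_of_le hε0 ht.1
          have htX : t ≤ X := le_trans ht.2 hxX
          rw [abs_mul, abs_neg, abs_of_pos (Real.rpow_pos_of_pos ht0 r)]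
          calc t ^ r * |g t| ≤ t ^ r * (c * t ^ m) := by
                apply mul_le_mul_of_nonneg_left (hg t ⟨ht0, htX⟩)
                  (Real.rpow_pos_of_pos ht0 r).le
            _ = c * t ^ (r + m) := by rw [Real.rpow_add ht0]; ring
      have h3 : ∫ t in ε..x, c * t ^ (r + m) = c * ((x ^ (r+m+1) - ε ^ (r+m+1)) / (r+m+1)) := by
        rw [intervalIntegral.integral_const_mul, integral_rpow (Or.inl hrm)]
      have h4 : c * ((x ^ (r+m+1) - ε ^ (r+m+1)) / (r+m+1)) ≤ c * x ^ (r+m+1) / (r+m+1) := by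
        have hd : 0 < r + m + 1 := by linarith
        have hε1 : 0 ≤ ε ^ (r+m+1) := (Real.rpow_pos_of_pos hε0 _).le
        rw [mul_div_assoc]
        apply mul_le_mul_of_nonneg_left _ hc
        gcongr
        linarith
      linarith
    have : f x = f ε + ∫ t in ε..x, -(t ^ r) * g t := by rw [hftc]; ring
    calc |f x| ≤ |f ε| + |∫ t in ε..x, -(t ^ r) * g t| := by
          rw [this]; exact abs_add_le _ _
      _ ≤ |f ε| + c * x ^ (r + m + 1) / (r + m + 1) := by linarith
  have hlim : Tendsto (fun ε => |f ε| + c * x ^ (r + m + 1) / (r + m + 1))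
      (nhdsWithin 0 (Ioi 0)) (nhds (0 + c * x ^ (r + m + 1) / (r + m + 1))) := by
    apply Tendsto.add_const
    have := hf0.abs
    simpa using this
  rw [zero_add] at hlim
  apply ge_of_tendsto hlim
  filter_upwards [Ioo_mem_nhdsGT_of_mem (Set.mem_Ico.mpr ⟨le_refl 0, hx0⟩)] with ε hε
  exact key ε hε


lemma uniqueness {a : ℝ} (ha0 : 0 < a) (ha1 : a < 1) {d1 d2 : ℝ → ℝ}
    (h1 : ∀ x ∈ Ioi (0:ℝ), HasDerivAt d1 (-(x ^ (a-1)) * d2 x) x)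
    (h2 : ∀ x ∈ Ioi (0:ℝ), HasDerivAt d2 (-(x ^ (-a)) * d1 x) x)
    (l1 : Tendsto d1 (nhdsWithin 0 (Ioi 0)) (nhds 0))
    (l2 : Tendsto d2 (nhdsWithin 0 (Ioi 0)) (nhds 0)) :
    ∀ x ∈ Ioi (0:ℝ), d1 x = 0 := by
  have hc1 : ContinuousOn d1 (Ioi 0) :=
    fun x hx => ((h1 x hx).continuousAt).continuousWithinAt
  have hc2 : ContinuousOn d2 (Ioi 0) :=
    fun x hx => ((h2 x hx).continuousAt).continuousWithinAt
  intro X hX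
  rw [Set.mem_Ioi] at hX
  -- a uniform bound M on (0, X]
  obtain ⟨M, hM0, hM⟩ : ∃ M, 0 ≤ M ∧ ∀ x ∈ Ioc (0:ℝ) X, |d1 x| ≤ M ∧ |d2 x| ≤ M := by
    have hev : ∀ᶠ y in nhdsWithin 0 (Ioi 0), |d1 y| < 1 ∧ |d2 y| < 1 := by
      have e1 : ∀ᶠ y in nhdsWithin 0 (Ioi 0), |d1 y| < 1 := by
        have := l1.abs
        rw [abs_zero] at this
        exact this.eventually_lt_const one_pos
      have e2 : ∀ᶠ y in nhdsWithin 0 (Ioi 0), |d2 y| < 1 := by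
        have := l2.abs
        rw [abs_zero] at this
        exact this.eventually_lt_const one_pos
      exact e1.and e2
    rw [eventually_nhdsWithin_iff] at hev
    rw [Metric.eventually_nhds_iff] at hev
    obtain ⟨δ, hδ0, hδ⟩ := hev
    set c : ℝ := min (δ/2) X with hcdef
    have hc0 : 0 < c := lt_min (by linarith) hX
    have hKsub : Icc c X ⊆ Ioi (0:ℝ) := fun t ht => lt_of_lt_of_le hc0 ht.1
    obtain ⟨C1, hC1⟩ := (isCompact_Icc (a := c) (b := X)).exists_bound_of_continuousOn
      (hc1.mono hKsub)
    obtain ⟨C2, hC2⟩ := (isCompact_Icc (a := c) (b := X)).exists_bound_of_continuousOn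
      (hc2.mono hKsub)
    refine ⟨max 1 (max C1 C2), by positivity, ?_⟩
    intro x hx
    by_cases hxδ : x < δ
    · have hmem : dist x 0 < δ := by
        rw [Real.dist_eq, sub_zero, abs_of_pos hx.1]
        exact hxδ
      have := hδ hmem (Set.mem_Ioi.mpr hx.1)
      constructor
      · exact le_trans this.1.le (le_max_left _ _)
      · exact le_trans this.2.le (le_max_left _ _)
    · push_neg at hxδ
      have hxK : x ∈ Icc c X := ⟨le_trans (min_le_left _ _) (by linarith), hx.2⟩
      constructor
      · exact le_trans (by simpa using hC1 x hxK)
          (le_trans (le_max_left C1 C2) (le_max_right 1 _))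
      · exact le_trans (by simpa using hC2 x hxK)
          (le_trans (le_max_right C1 C2) (le_max_right 1 _))
  -- the iterated bound
  have main : ∀ n : ℕ, ∀ x ∈ Ioc (0:ℝ) X, |d2 x| ≤ M / a^n / n.factorial * x ^ (n:ℝ) := by
    intro n
    induction n with
    | zero =>
      intro x hx
      simpa using (hM x hx).2
    | succ n ih =>
      set C : ℝ := M / a^n / n.factorial with hCdef
      have hC0 : 0 ≤ C := by
        have : (0:ℝ) < a^n := by positivity
        have : (0:ℝ) < (n.factorial : ℝ) := by positivity
        positivity
      have hg1 : ∀ s ∈ Ioc (0:ℝ) X, |d2 s| ≤ C * s ^ (n:ℝ) := by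
        intro s hs
        have := ih s hs
        calc |d2 s| ≤ M / a^n / n.factorial * s ^ (n:ℝ) := this
          _ = C * s ^ (n:ℝ) := by rw [hCdef]
      have step1 := integral_step hX hC0
        (show -1 < (a-1) + (n:ℝ) by
          have : (0:ℝ) ≤ (n:ℝ) := Nat.cast_nonneg n
          linarith)
        h1 hc2 l1 hg1
      have hna : (0:ℝ) < (n:ℝ) + a := by
        have : (0:ℝ) ≤ (n:ℝ) := Nat.cast_nonneg n
        linarith
      have hg2 : ∀ s ∈ Ioc (0:ℝ) X, |d1 s| ≤ (C / ((n:ℝ)+a)) * s ^ ((n:ℝ)+a) := by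
        intro s hs
        have := step1 s hs
        have e1 : (a-1) + (n:ℝ) + 1 = (n:ℝ) + a := by ring
        rw [e1] at this
        calc |d1 s| ≤ C * s ^ ((n:ℝ)+a) / ((n:ℝ)+a) := this
          _ = (C / ((n:ℝ)+a)) * s ^ ((n:ℝ)+a) := by ring
      have step2 := integral_step hX (by positivity : (0:ℝ) ≤ C / ((n:ℝ)+a))
        (show -1 < -a + ((n:ℝ)+a) by
          have : (0:ℝ) ≤ (n:ℝ) := Nat.cast_nonneg n
          linarith)
        h2 hc1 l2 hg2
      intro x hx
      have := step2 x hx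
      have e2 : -a + ((n:ℝ)+a) + 1 = (n:ℝ) + 1 := by ring
      rw [e2] at this
      have hn1 : (0:ℝ) < (n:ℝ) + 1 := by positivity
      have ecast : ((n+1 : ℕ) : ℝ) = (n:ℝ) + 1 := by push_cast; ring
      rw [ecast]
      have hxp : (0:ℝ) < x ^ ((n:ℝ)+1) := Real.rpow_pos_of_pos hx.1 _
      have hcoef : C / ((n:ℝ)+a) / ((n:ℝ)+1) ≤ M / a^(n+1) / (n+1).factorial := by
        have h1' : C / ((n:ℝ)+a) ≤ C / a := by
          apply div_le_div_of_nonneg_left hC0 ha0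
          have : (0:ℝ) ≤ (n:ℝ) := Nat.cast_nonneg n
          linarith
        have h2' : C / ((n:ℝ)+a) / ((n:ℝ)+1) ≤ C / a / ((n:ℝ)+1) := by
          have hn1 : (0:ℝ) < (n:ℝ) + 1 := by positivity
          gcongr
        have h3' : C / a / ((n:ℝ)+1) = M / a^(n+1) / (n+1).factorial := by
          rw [hCdef]
          have hfac : ((n+1).factorial : ℝ) = ((n:ℝ)+1) * (n.factorial : ℝ) := by
            push_cast [Nat.factorial_succ]; ring
          rw [hfac, pow_succ]
          have ha0' : a ≠ 0 := ha0.ne'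
          have hfn : (n.factorial : ℝ) ≠ 0 := by positivity
          have hn1' : ((n:ℝ)+1) ≠ 0 := by positivity
          field_simp
        linarith
      calc |d2 x| ≤ C / ((n:ℝ)+a) * x ^ ((n:ℝ)+1) / ((n:ℝ)+1) := this
        _ = (C / ((n:ℝ)+a) / ((n:ℝ)+1)) * x ^ ((n:ℝ)+1) := by ring
        _ ≤ M / a^(n+1) / (n+1).factorial * x ^ ((n:ℝ)+1) :=
            mul_le_mul_of_nonneg_right hcoef hxp.le
  -- conclude d2 = 0 on Ioc
  have hd2zero : ∀ x ∈ Ioc (0:ℝ) X, d2 x = 0 := by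
    intro x hx
    have hsq : ∀ n : ℕ, |d2 x| ≤ M * ((x/a)^n / n.factorial) := by
      intro n
      have := main n x hx
      have e : M / a^n / n.factorial * x ^ (n:ℝ) = M * ((x/a)^n / n.factorial) := by
        rw [Real.rpow_natCast, div_pow]
        have : (0:ℝ) < a^n := by positivity
        have hfn : (0:ℝ) < (n.factorial:ℝ) := by positivity
        field_simp
      rw [e] at this
      exact this
    have hlim : Tendsto (fun n : ℕ => M * ((x/a)^n / n.factorial)) atTop (nhds 0) := by
      have := FloorSemiring.tendsto_pow_div_factorial_atTop (K := ℝ) (x/a)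
      simpa using this.const_mul M
    have : |d2 x| ≤ 0 := ge_of_tendsto hlim (Filter.Eventually.of_forall hsq)
    have := abs_nonneg (d2 x)
    have : |d2 x| = 0 := le_antisymm ‹|d2 x| ≤ 0› this
    exact abs_eq_zero.mp this
  -- conclude d1 = 0
  have hg0 : ∀ s ∈ Ioc (0:ℝ) X, |d2 s| ≤ 0 * s ^ (0:ℝ) := by
    intro s hs
    rw [hd2zero s hs]
    simp
  have := integral_step hX (le_refl (0:ℝ))
    (show -1 < (a-1) + (0:ℝ) by linarith) h1 hc2 l1 hg0 X ⟨hX, le_refl X⟩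
  simp at this
  exact this


lemma U_eq_Phi {a : ℝ} (ha0 : 0 < a) (ha1 : a < 1) {x : ℝ} (hx : 0 < x) :
    U a x = Phi a x := by
  have h1a0 : 0 < 1 - a := by linarith
  have h1a1 : 1 - a < 1 := by linarith
  set d1 : ℝ → ℝ := fun y => U a y - Phi a y with hd1
  set d2 : ℝ → ℝ := fun y => U (1-a) y - Phi (1-a) y with hd2
  have h1 : ∀ y ∈ Ioi (0:ℝ), HasDerivAt d1 (-(y ^ (a-1)) * d2 y) y := by
    intro y hy
    have hy0 : (0:ℝ) < y := hy
    have h := (hasDerivAt_U ha0 ha1 hy0).sub (hasDerivAt_Phi ha0 ha1 hy0)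
    refine h.congr_deriv ?_
    symm
    rw [hd2]
    ring
  have h2 : ∀ y ∈ Ioi (0:ℝ), HasDerivAt d2 (-(y ^ (-a)) * d1 y) y := by
    intro y hy
    have hy0 : (0:ℝ) < y := hy
    have h := (hasDerivAt_U h1a0 h1a1 hy0).sub (hasDerivAt_Phi h1a0 h1a1 hy0)
    refine h.congr_deriv ?_
    symm
    rw [hd1]
    rw [show (1:ℝ) - (1-a) = a by ring, show (1:ℝ) - a - 1 = -a by ring]
    ring
  have l1 : Tendsto d1 (nhdsWithin 0 (Ioi 0)) (nhds 0) := by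
    have := (tendsto_U_zero ha0 ha1).sub (tendsto_Phi_zero ha0)
    simpa using this
  have l2 : Tendsto d2 (nhdsWithin 0 (Ioi 0)) (nhds 0) := by
    have := (tendsto_U_zero h1a0 h1a1).sub (tendsto_Phi_zero h1a0)
    simpa using this
  have := uniqueness ha0 ha1 h1 h2 l1 l2 x hx
  rw [hd1] at this
  simpa [sub_eq_zero] using this

lemma LP_nonneg {a : ℝ} (ha0 : 0 < a) (ha1 : a < 1) {x : ℝ} (hx : 0 < x) :
    0 ≤ L a x - x ^ a * P a x := by
  have hU : 0 ≤ U a x := (U_eq_Phi ha0 ha1 hx) ▸ Phi_nonneg a x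
  have hc : 0 < Real.Gamma a * Real.Gamma (1 - a) :=
    mul_pos (Real.Gamma_pos_of_pos ha0) (Real.Gamma_pos_of_pos (by linarith))
  rw [U] at hU
  exact nonneg_of_mul_nonneg_right hU hc


end BesselPos

end

noncomputable section
open Real

/-- The modified Bessel function of the first kind and order `ν`,
`I_ν(z) = ∑_{k=0}^∞ (z/2)^(2k+ν) / (k! Γ(k+ν+1))`. -/
def besselI (ν z : ℝ) : ℝ :=
  ∑' k : ℕ, (z / 2) ^ (2 * (k : ℝ) + ν) / ((Nat.factorial k : ℝ) * Real.Gamma ((k : ℝ) + ν + 1))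

/-- For `-1 < ν < 0` and `z > 0`, `I_ν(z) - I_{-ν}(z) ≥ 0`. -/
theorem besselI_sub_besselI_neg_nonneg (ν z : ℝ) (hν₁ : -1 < ν) (hν₂ : ν < 0) (hz : 0 < z) :
    0 ≤ besselI ν z - besselI (-ν) z := by
  set a : ℝ := -ν with ha
  have ha0 : 0 < a := by simp [ha]; linarith
  have ha1 : a < 1 := by simp [ha]; linarith
  set w : ℝ := z / 2 with hw
  have hw0 : 0 < w := by positivity
  set x : ℝ := w ^ 2 with hx
  have hx0 : 0 < x := by positivity
  have hterm : ∀ (k : ℕ) (μ : ℝ), w ^ (2 * (k:ℝ) + μ) = x ^ k * w ^ μ := by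
    intro k μ
    rw [Real.rpow_add hw0]
    congr 1
    rw [show (2 * (k:ℝ)) = ((2 * k : ℕ) : ℝ) by push_cast; ring, Real.rpow_natCast, hx, pow_mul]
  have hI1 : besselI ν z = w ^ (-a : ℝ) * BesselPos.L a x := by
    rw [besselI, BesselPos.L, ← tsum_mul_left]
    apply tsum_congr
    intro k
    rw [hterm k ν, BesselPos.Lc]
    have hG : ((k:ℝ) + ν + 1) = ((k:ℝ) + 1 - a) := by rw [ha]; ring
    rw [hG, ha]
    field_simp
  have hI2 : besselI (-ν) z = w ^ (a : ℝ) * BesselPos.P a x := by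
    rw [besselI, BesselPos.P, ← tsum_mul_left]
    apply tsum_congr
    intro k
    rw [hterm k (-ν), BesselPos.Pc]
    have hG : ((k:ℝ) + -ν + 1) = ((k:ℝ) + 1 + a) := by rw [ha]; ring
    rw [hG, ← ha]
    field_simp
  have hxa : x ^ (a:ℝ) = w ^ (2*a) := by
    rw [hx, ← Real.rpow_natCast w 2, ← Real.rpow_mul hw0.le]
    norm_num
  have hsplit : w ^ (a:ℝ) = w ^ (-a:ℝ) * x ^ (a:ℝ) := by
    rw [hxa, ← Real.rpow_add hw0]
    congr 1
    ring
  rw [hI1, hI2, hsplit]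
  have hLP := BesselPos.LP_nonneg ha0 ha1 hx0
  have hwa : (0:ℝ) ≤ w ^ (-a:ℝ) := (Real.rpow_pos_of_pos hw0 _).le
  calc (0:ℝ) ≤ w ^ (-a:ℝ) * (BesselPos.L a x - x ^ (a:ℝ) * BesselPos.P a x) :=
        mul_nonneg hwa hLP
    _ = w ^ (-a:ℝ) * BesselPos.L a x - w ^ (-a:ℝ) * x ^ (a:ℝ) * BesselPos.P a x := by ring
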